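/- Let T > 0, b > 0, β > 0, and let c : [0,T] → ℝ be continuous with c(t) > 0 for all t ∈ [0,T]. Then there is a unique C¹ function g : [0,T] → ℝ satisfying g'(t) = c(t) − g(t)²/b for all t ∈ [0,T] together with the terminal condition g(T) = −β, and this solution satisfies g(t) < 0 for every t ∈ [0,T]. -/

import Mathlib

open Set Filter Topology

lemma barrier_lt {T y : ℝ} (hT : 0 < T) {f d : ℝ → ℝ}
    (hf : ContinuousOn f (Icc 0 T))
    (hder : ∀ t ∈ Icc (0:ℝ) T, HasDerivWithinAt f (d t) (Icc 0 T) t)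
    (hfT : f T < y)
    (hpos : ∀ t ∈ Icc (0:ℝ) T, f t = y → 0 < d t) :
    ∀ t ∈ Icc (0:ℝ) T, f t < y := by
  by_contra hcon
  push_neg at hcon
  obtain ⟨t₀, ht₀, hy⟩ := hcon
  -- the crossing set
  set K : Set ℝ := Icc 0 T ∩ f ⁻¹' {y} with hK
  have hTmem : T ∈ Icc (0:ℝ) T := ⟨le_of_lt hT, le_refl T⟩
  have hKne : K.Nonempty := by
    have hsub : Icc t₀ T ⊆ Icc 0 T := Icc_subset_Icc ht₀.1 le_rfl
    have := intermediate_value_Icc' ht₀.2 (hf.mono hsub)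
    have hyim : y ∈ f '' Icc t₀ T := this ⟨le_of_lt hfT, hy⟩
    obtain ⟨s, hs, hsy⟩ := hyim
    exact ⟨s, hsub hs, hsy⟩
  have hKcl : IsClosed K := hf.preimage_isClosed_of_isClosed isClosed_Icc isClosed_singleton
  have hKbdd : BddAbove K := ⟨T, fun x hx => hx.1.2⟩
  set t₁ := sSup K with ht₁
  have ht₁K : t₁ ∈ K := hKcl.csSup_mem hKne hKbdd
  have ht₁mem : t₁ ∈ Icc (0:ℝ) T := ht₁K.1
  have ht₁y : f t₁ = y := ht₁K.2
  have ht₁T : t₁ < T := lt_of_le_of_ne ht₁mem.2 (fun h => by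
    rw [h] at ht₁y; exact absurd ht₁y (ne_of_lt hfT))
  -- beyond t₁ the function is < y
  have hafter : ∀ u ∈ Ioc t₁ T, f u < y := by
    intro u hu
    have humem : u ∈ Icc (0:ℝ) T := ⟨le_trans ht₁mem.1 hu.1.le, hu.2⟩
    rcases lt_trichotomy (f u) y with h | h | h
    · exact h
    · exact absurd (le_csSup hKbdd (⟨humem, h⟩ : u ∈ K)) (not_le.mpr hu.1)
    · -- IVT between u and T gives a crossing above t₁
      have hsub : Icc u T ⊆ Icc 0 T := Icc_subset_Icc humem.1 le_rfl
      have := intermediate_value_Icc' hu.2 (hf.mono hsub)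
      obtain ⟨s, hs, hsy⟩ := this ⟨le_of_lt hfT, le_of_lt h⟩
      have : s ≤ t₁ := le_csSup hKbdd (⟨hsub hs, hsy⟩ : s ∈ K)
      linarith [hs.1, hu.1]
  -- derivative positive at t₁ forces f to rise above y just after t₁
  have hd := hder t₁ ht₁mem
  have hdpos := hpos t₁ ht₁mem ht₁y
  rw [hasDerivWithinAt_iff_tendsto_slope] at hd
  have hslope : ∀ᶠ u in 𝓝[Icc (0:ℝ) T \ {t₁}] t₁, 0 < slope f t₁ u :=
    hd.eventually (eventually_gt_nhds hdpos)
  have hsub2 : Ioc t₁ T ⊆ Icc (0:ℝ) T \ {t₁} := by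
    intro u hu
    exact ⟨⟨le_trans ht₁mem.1 hu.1.le, hu.2⟩, ne_of_gt hu.1⟩
  have hne : (𝓝[Ioc t₁ T] t₁).NeBot := by
    rw [← mem_closure_iff_nhdsWithin_neBot, closure_Ioc (ne_of_lt ht₁T)]
    exact ⟨le_rfl, le_of_lt ht₁T⟩
  have hslope2 : ∀ᶠ u in 𝓝[Ioc t₁ T] t₁, 0 < slope f t₁ u :=
    hslope.filter_mono (nhdsWithin_mono _ hsub2)
  have hmem2 : ∀ᶠ u in 𝓝[Ioc t₁ T] t₁, u ∈ Ioc t₁ T := self_mem_nhdsWithin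
  obtain ⟨u, hu1, hu2⟩ := (hslope2.and hmem2).exists
  have : 0 < f u - f t₁ := by
    have hpos' : 0 < u - t₁ := sub_pos.mpr hu2.1
    have := mul_pos hu1 hpos'
    rwa [slope_def_field, div_mul_cancel₀ _ (ne_of_gt hpos')] at this
  have := hafter u hu2
  rw [ht₁y] at *
  linarith


/-- Mirror version: if `f T > y` and the derivative is negative whenever `f t = y`,
then `f > y` on `[0, T]`. -/
lemma barrier_gt {T y : ℝ} (hT : 0 < T) {f d : ℝ → ℝ}
    (hf : ContinuousOn f (Icc 0 T))
    (hder : ∀ t ∈ Icc (0:ℝ) T, HasDerivWithinAt f (d t) (Icc 0 T) t)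
    (hfT : y < f T)
    (hneg : ∀ t ∈ Icc (0:ℝ) T, f t = y → d t < 0) :
    ∀ t ∈ Icc (0:ℝ) T, y < f t := by
  have := barrier_lt (y := -y) hT (f := fun t => -(f t)) (d := fun t => -(d t))
    (hf.neg) (fun t ht => (hder t ht).neg) (by simpa using hfT)
    (fun t ht h => by
      have : f t = y := by linarith [neg_eq_iff_eq_neg.mp h]
      simpa using hneg t ht this)
  intro t ht
  have := this t ht
  simpa using this

/-- The scalar Riccati terminal value problem
`g' = c(t) - g²/b`, `g(T) = -β` (with `c` continuous and positive, `b, β > 0`)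
has a unique C¹ solution on `[0, T]`, and this solution is negative on `[0, T]`. -/
theorem stmt_0 (T b β : ℝ) (hT : 0 < T) (hb : 0 < b) (hβ : 0 < β)
    (c : ℝ → ℝ) (hc : ContinuousOn c (Icc 0 T))
    (hcpos : ∀ t ∈ Icc (0 : ℝ) T, 0 < c t) :
    ∃ g : ℝ → ℝ,
      (ContDiffOn ℝ 1 g (Icc 0 T) ∧
        (∀ t ∈ Icc (0 : ℝ) T, HasDerivWithinAt g (c t - (g t) ^ 2 / b) (Icc 0 T) t) ∧
        g T = -β) ∧
      (∀ t ∈ Icc (0 : ℝ) T, g t < 0) ∧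
      (∀ g' : ℝ → ℝ,
        (ContDiffOn ℝ 1 g' (Icc 0 T) ∧
          (∀ t ∈ Icc (0 : ℝ) T, HasDerivWithinAt g' (c t - (g' t) ^ 2 / b) (Icc 0 T) t) ∧
          g' T = -β) →
        EqOn g g' (Icc 0 T)) := by
  have hTmem : T ∈ Icc (0:ℝ) T := ⟨le_of_lt hT, le_rfl⟩
  have h0mem : (0:ℝ) ∈ Icc (0:ℝ) T := ⟨le_rfl, le_of_lt hT⟩
  have hIccNe : (Icc (0:ℝ) T).Nonempty := ⟨0, h0mem⟩
  -- max and min of c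
  obtain ⟨tmax, htmax, hmax⟩ := isCompact_Icc.exists_isMaxOn hIccNe hc
  obtain ⟨tmin, htmin, hmin⟩ := isCompact_Icc.exists_isMinOn hIccNe hc
  set Cmax := c tmax with hCmax
  set cmin := c tmin with hcmin
  have hCmaxpos : 0 < Cmax := hcpos tmax htmax
  have hcminpos : 0 < cmin := hcpos tmin htmin
  have hcle : ∀ t ∈ Icc (0:ℝ) T, c t ≤ Cmax := fun t ht => hmax ht
  have hcge : ∀ t ∈ Icc (0:ℝ) T, cmin ≤ c t := fun t ht => hmin ht
  -- barriers
  set M := max β (Real.sqrt (b * Cmax)) + 1 with hM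
  have hMpos : 0 < M := by positivity
  have hβM : β < M := by
    have := le_max_left β (Real.sqrt (b * Cmax)); linarith
  have hM2 : b * Cmax < M ^ 2 := by
    have h1 : Real.sqrt (b * Cmax) < M := by
      have := le_max_right β (Real.sqrt (b * Cmax)); linarith
    have h0 : (0:ℝ) ≤ Real.sqrt (b * Cmax) := Real.sqrt_nonneg _
    calc b * Cmax = Real.sqrt (b * Cmax) ^ 2 := (Real.sq_sqrt (by positivity)).symm
      _ < M ^ 2 := by nlinarith
  set m := min β (Real.sqrt (b * cmin)) / 2 with hm
  have hmpos : 0 < m := by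
    have h1 : 0 < Real.sqrt (b * cmin) := Real.sqrt_pos.mpr (by positivity)
    have := lt_min hβ h1
    positivity
  have hmβ : m < β := by
    have := min_le_left β (Real.sqrt (b * cmin)); rw [hm]; linarith
  have hm2 : m ^ 2 < b * cmin := by
    have h1 : 0 < Real.sqrt (b * cmin) := Real.sqrt_pos.mpr (by positivity)
    have h2 : m < Real.sqrt (b * cmin) := by
      have := min_le_right β (Real.sqrt (b * cmin)); rw [hm]; linarith
    calc m ^ 2 < Real.sqrt (b * cmin) ^ 2 := by nlinarith
      _ = b * cmin := Real.sq_sqrt (by positivity)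
  have hmM : m < M := lt_trans hmβ hβM
  -- clamped vector field
  set φ : ℝ → ℝ := fun x => min 0 (max x (-M)) with hφ
  have hφmem : ∀ x, -M ≤ φ x ∧ φ x ≤ 0 := by
    intro x
    constructor
    · exact le_min (by linarith) (le_max_right _ _)
    · exact min_le_left _ _
  have hφabs : ∀ x, |φ x| ≤ M := by
    intro x
    rw [abs_le]
    exact ⟨(hφmem x).1, le_trans (hφmem x).2 hMpos.le⟩
  have hφid : ∀ x, -M ≤ x → x ≤ 0 → φ x = x := by
    intro x h1 h2
    rw [hφ]
    simp only [max_eq_left h1, min_eq_right h2]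
  have hφlip : ∀ x y : ℝ, |φ x - φ y| ≤ |x - y| := by
    intro x y
    calc |φ x - φ y| ≤ max |0 - 0| |max x (-M) - max y (-M)| := abs_min_sub_min_le_max _ _ _ _
      _ = |max x (-M) - max y (-M)| := by simp
      _ ≤ max |x - y| |(-M) - (-M)| := abs_max_sub_max_le_max _ _ _ _
      _ = |x - y| := by simp
  set v : ℝ → ℝ → ℝ := fun t x => c t - (φ x) ^ 2 / b with hv
  -- PL data
  set C₀ : ℝ := Cmax + M ^ 2 / b with hC₀
  have hC₀pos : 0 < C₀ := by positivity
  set R : ℝ := C₀ * T + 1 with hR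
  have hRpos : 0 < R := by positivity
  set L : NNReal := Real.toNNReal (2 * M / b) with hL
  have hvlip : ∀ s : Set ℝ, ∀ t, LipschitzOnWith L (v t) s := by
    intro s t
    apply LipschitzOnWith.of_dist_le_mul
    intro x _ y _
    rw [Real.dist_eq, Real.dist_eq, hL, Real.coe_toNNReal _ (by positivity)]
    have key : |v t x - v t y| ≤ 2 * M / b * |x - y| := by
      have h1 : v t x - v t y = ((φ y) ^ 2 - (φ x) ^ 2) / b := by
        rw [hv]; ring
      rw [h1, abs_div, abs_of_pos hb]
      rw [div_le_iff₀ hb]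
      have h2 : |(φ y) ^ 2 - (φ x) ^ 2| = |φ y + φ x| * |φ y - φ x| := by
        rw [← abs_mul]; ring_nf
      rw [h2]
      have h3 : |φ y + φ x| ≤ 2 * M := by
        calc |φ y + φ x| ≤ |φ y| + |φ x| := abs_add_le _ _
          _ ≤ 2 * M := by linarith [hφabs x, hφabs y]
      have h4 : |φ y - φ x| ≤ |x - y| := by
        calc |φ y - φ x| = |φ x - φ y| := abs_sub_comm _ _
          _ ≤ |x - y| := hφlip x y
      calc |φ y + φ x| * |φ y - φ x| ≤ (2 * M) * |x - y| :=
            mul_le_mul h3 h4 (abs_nonneg _) (by positivity)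
        _ = 2 * M / b * |x - y| * b := by field_simp
    exact key
  have hpl : IsPicardLindelof v (tmin := 0) (tmax := T) ⟨T, hTmem⟩ (-β) (Real.toNNReal R) 0
      (Real.toNNReal C₀) L :=
    { lipschitzOnWith := fun t _ => hvlip _ t
      continuousOn := fun x _ => hc.sub continuousOn_const
      norm_le := by
        intro t ht x _
        rw [Real.coe_toNNReal _ hC₀pos.le]
        rw [Real.norm_eq_abs]
        have h1 : |c t - (φ x) ^ 2 / b| ≤ |c t| + (φ x) ^ 2 / b := by
          calc |c t - (φ x) ^ 2 / b| ≤ |c t| + |(φ x) ^ 2 / b| := abs_sub _ _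
            _ = |c t| + (φ x) ^ 2 / b := by
                rw [abs_div, abs_of_pos hb, abs_pow, sq_abs]
        have h2 : |c t| ≤ Cmax := by
          rw [abs_of_pos (hcpos t ht)]; exact hcle t ht
        have h3 : (φ x) ^ 2 ≤ M ^ 2 := by
          rw [← sq_abs]
          exact pow_le_pow_left₀ (abs_nonneg _) (hφabs x) 2
        have h4 : (φ x) ^ 2 / b ≤ M ^ 2 / b := by gcongr
        rw [hC₀]; linarith
      mul_max_le := by
        rw [Real.coe_toNNReal _ hC₀pos.le, Real.coe_toNNReal _ hRpos.le, NNReal.coe_zero]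
        show C₀ * max (T - T) (T - 0) ≤ R - 0
        rw [sub_zero R, hR]
        have : max (T - T) (T - 0) = T := by
          rw [sub_self, sub_zero, max_eq_right hT.le]
        rw [this]; linarith }
  obtain ⟨f, hfT, hfd⟩ := hpl.exists_eq_forall_mem_Icc_hasDerivWithinAt₀
  have hfT : f T = -β := hfT
  have hfc : ContinuousOn f (Icc 0 T) := fun t ht => (hfd t ht).continuousWithinAt
  -- a priori bounds
  have hupper : ∀ t ∈ Icc (0:ℝ) T, f t < -m :=
    barrier_lt hT hfc hfd (by rw [hfT]; linarith)
      (by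
        intro t ht hft
        have hφm : φ (f t) = f t := hφid _ (by rw [hft]; linarith) (by rw [hft]; linarith)
        have : v t (f t) = c t - m ^ 2 / b := by
          rw [hv]; simp only; rw [hφm, hft]; ring_nf
        rw [this]
        have h5 : m ^ 2 / b < cmin := by
          rw [div_lt_iff₀ hb]; linarith [hm2]
        linarith [hcge t ht])
  have hlower : ∀ t ∈ Icc (0:ℝ) T, -M < f t :=
    barrier_gt hT hfc hfd (by rw [hfT]; linarith)
      (by
        intro t ht hft
        have hφm : φ (f t) = f t := hφid _ (by rw [hft]) (by rw [hft]; linarith)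
        have hveq : v t (f t) = c t - M ^ 2 / b := by
          rw [hv]; simp only; rw [hφm, hft]; ring_nf
        rw [hveq]
        have h5 : Cmax < M ^ 2 / b := by
          rw [lt_div_iff₀ hb]; linarith [hM2]
        linarith [hcle t ht])
  -- on the range of f, the clamped field agrees with the true field
  have hfeq : ∀ t ∈ Icc (0:ℝ) T, v t (f t) = c t - (f t) ^ 2 / b := by
    intro t ht
    have h1 := hupper t ht
    have h2 := hlower t ht
    rw [hv]; simp only
    rw [hφid _ h2.le (by linarith)]
  have hfd' : ∀ t ∈ Icc (0:ℝ) T, HasDerivWithinAt f (c t - (f t) ^ 2 / b) (Icc 0 T) t := by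
    intro t ht
    rw [← hfeq t ht]
    exact hfd t ht
  -- C¹ smoothness
  have hUD : UniqueDiffOn ℝ (Icc (0:ℝ) T) := uniqueDiffOn_Icc hT
  have hderivWithin : ∀ t ∈ Icc (0:ℝ) T, derivWithin f (Icc 0 T) t = c t - (f t) ^ 2 / b :=
    fun t ht => (hfd' t ht).derivWithin (hUD t ht)
  have hC1 : ContDiffOn ℝ 1 f (Icc 0 T) := by
    have h01 : (1 : WithTop ℕ∞) = (0 : ℕ) + 1 := by norm_num
    rw [h01, contDiffOn_succ_iff_derivWithin hUD]
    refine ⟨fun t ht => (hfd' t ht).differentiableWithinAt, by simp, ?_⟩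
    have hcont : ContinuousOn (derivWithin f (Icc 0 T)) (Icc 0 T) :=
      (hc.sub (((hfc.pow 2)).div_const b)).congr hderivWithin
    have h0 : ContDiffOn ℝ 0 (derivWithin f (Icc 0 T)) (Icc 0 T) := contDiffOn_zero.mpr hcont
    exact_mod_cast h0
  refine ⟨f, ⟨hC1, hfd', hfT⟩, fun t ht => lt_trans (hupper t ht) (by linarith), ?_⟩
  -- uniqueness
  rintro g' ⟨hg'C1, hg'd, hg'T⟩
  have hg'c : ContinuousOn g' (Icc 0 T) := hg'C1.continuousOn
  obtain ⟨u, hu, humax⟩ := isCompact_Icc.exists_isMaxOn hIccNe hg'c.norm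
  set B : ℝ := max M ‖g' u‖ with hB
  have hBpos : 0 < B := lt_of_lt_of_le hMpos (le_max_left _ _)
  set w : ℝ → ℝ → ℝ := fun t x => c t - x ^ 2 / b with hw
  set K : NNReal := Real.toNNReal (2 * B / b) with hK
  have hwlip : ∀ t, LipschitzOnWith K (w t) (Metric.closedBall (0:ℝ) B) := by
    intro t
    apply LipschitzOnWith.of_dist_le_mul
    intro x hx y hy
    rw [Real.dist_eq, Real.dist_eq, hK, Real.coe_toNNReal _ (by positivity)]
    rw [Metric.mem_closedBall, Real.dist_eq, sub_zero] at hx hy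
    have h1 : w t x - w t y = (y ^ 2 - x ^ 2) / b := by rw [hw]; ring
    rw [h1, abs_div, abs_of_pos hb, div_le_iff₀ hb]
    have h2 : |y ^ 2 - x ^ 2| = |y + x| * |y - x| := by rw [← abs_mul]; ring_nf
    rw [h2]
    have h3 : |y + x| ≤ 2 * B := by
      calc |y + x| ≤ |y| + |x| := abs_add_le _ _
        _ ≤ 2 * B := by linarith
    have h4 : |y - x| ≤ |x - y| := by rw [abs_sub_comm]
    calc |y + x| * |y - x| ≤ (2 * B) * |x - y| :=
          mul_le_mul h3 h4 (abs_nonneg _) (by positivity)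
      _ = 2 * B / b * |x - y| * b := by field_simp
  have hmemIic : ∀ t ∈ Ioc (0:ℝ) T, Icc (0:ℝ) T ∈ 𝓝[Iic t] t := by
    intro t ht
    rw [mem_nhdsWithin]
    exact ⟨Ioi 0, isOpen_Ioi, ht.1, fun x hx => ⟨le_of_lt hx.1, le_trans hx.2 ht.2⟩⟩
  have hfIic : ∀ t ∈ Ioc (0:ℝ) T, HasDerivWithinAt f (w t (f t)) (Iic t) t := by
    intro t ht
    have htmem : t ∈ Icc (0:ℝ) T := ⟨ht.1.le, ht.2⟩
    exact ((hfd' t htmem).mono_of_mem_nhdsWithin (hmemIic t ht))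
  have hgIic : ∀ t ∈ Ioc (0:ℝ) T, HasDerivWithinAt g' (w t (g' t)) (Iic t) t := by
    intro t ht
    have htmem : t ∈ Icc (0:ℝ) T := ⟨ht.1.le, ht.2⟩
    exact ((hg'd t htmem).mono_of_mem_nhdsWithin (hmemIic t ht))
  have hfball : ∀ t ∈ Ioc (0:ℝ) T, f t ∈ Metric.closedBall (0:ℝ) B := by
    intro t ht
    have htmem : t ∈ Icc (0:ℝ) T := ⟨ht.1.le, ht.2⟩
    rw [Metric.mem_closedBall, Real.dist_eq, sub_zero, abs_le]
    constructor
    · linarith [hlower t htmem, le_max_left M ‖g' u‖]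
    · have := hupper t htmem
      have := le_max_left M ‖g' u‖
      linarith [hmpos, hMpos]
  have hgball : ∀ t ∈ Ioc (0:ℝ) T, g' t ∈ Metric.closedBall (0:ℝ) B := by
    intro t ht
    have htmem : t ∈ Icc (0:ℝ) T := ⟨ht.1.le, ht.2⟩
    rw [Metric.mem_closedBall, Real.dist_eq, sub_zero]
    calc |g' t| = ‖g' t‖ := (Real.norm_eq_abs _).symm
      _ ≤ ‖g' u‖ := humax htmem
      _ ≤ B := le_max_right _ _
  exact ODE_solution_unique_of_mem_Icc_left (fun t _ => hwlip t) hfc hfIic hfball hg'c hgIic hgball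
    (by rw [hfT, hg'T])
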